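/- For every n ≥ 2, the pair (ℓ₁ⁿ, 𝕂) fails property L_{o,p}; that is, there exist ε₀ > 0 and a point x ∈ S_{ℓ₁ⁿ} such that for every η > 0 there is a norm-one functional x* with |x*(x)| > 1 − η, yet no x₀ ∈ S_{ℓ₁ⁿ} with ‖x₀ − x‖ < ε₀ satisfies |x*(x₀)| = 1. -/

import Mathlib

/-- The pair `(X, Y)` has property `L_{o,p}`: for every `ε > 0` and `x ∈ S_X` there is
`η(ε, x) > 0` such that any norm-one operator `T` with `‖T x‖ > 1 - η` attains its norm at a
point `x₀ ∈ S_X` with `‖x₀ - x‖ < ε`. -/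
def HasLop (𝕜 X Y : Type*) [RCLike 𝕜] [NormedAddCommGroup X] [NormedSpace 𝕜 X]
    [NormedAddCommGroup Y] [NormedSpace 𝕜 Y] : Prop :=
  ∀ ε : ℝ, 0 < ε → ∀ x : X, ‖x‖ = 1 →
    ∃ η : ℝ, 0 < η ∧ ∀ T : X →L[𝕜] Y, ‖T‖ = 1 → 1 - η < ‖T x‖ →
      ∃ x₀ : X, ‖x₀‖ = 1 ∧ ‖T x₀‖ = 1 ∧ ‖x₀ - x‖ < ε

/-- The pair `(X, Y)` has property `L_{p,o}`: for every `ε > 0` and norm-one operator `T` there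
is `η(ε, T) > 0` such that whenever `x ∈ S_X` satisfies `‖T x‖ > 1 - η`, there is a norm-one
operator `S` attaining its norm at `x` with `‖S - T‖ < ε`. -/
def HasLpo (𝕜 X Y : Type*) [RCLike 𝕜] [NormedAddCommGroup X] [NormedSpace 𝕜 X]
    [NormedAddCommGroup Y] [NormedSpace 𝕜 Y] : Prop :=
  ∀ ε : ℝ, 0 < ε → ∀ T : X →L[𝕜] Y, ‖T‖ = 1 →
    ∃ η : ℝ, 0 < η ∧ ∀ x : X, ‖x‖ = 1 → 1 - η < ‖T x‖ →
      ∃ S : X →L[𝕜] Y, ‖S‖ = 1 ∧ ‖S x‖ = 1 ∧ ‖S - T‖ < ε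


open scoped ENNReal

lemma l1n_norm_eq {𝕜 : Type*} [RCLike 𝕜] {n : ℕ} (y : PiLp 1 (fun _ : Fin n => 𝕜)) :
    ‖y‖ = ∑ i, ‖y i‖ := by
  rw [PiLp.norm_eq_sum (p := 1) (by norm_num)]
  simp

lemma l1n_coord_le {𝕜 : Type*} [RCLike 𝕜] {n : ℕ} (y : PiLp 1 (fun _ : Fin n => 𝕜))
    (i : Fin n) : ‖y i‖ ≤ ‖y‖ := by
  rw [l1n_norm_eq]
  exact Finset.single_le_sum (fun j _ => norm_nonneg _) (Finset.mem_univ i)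

lemma l1n_two_coords_le {𝕜 : Type*} [RCLike 𝕜] {n : ℕ} (y : PiLp 1 (fun _ : Fin n => 𝕜))
    {i j : Fin n} (hij : i ≠ j) : ‖y i‖ + ‖y j‖ ≤ ‖y‖ := by
  rw [l1n_norm_eq]
  have : ‖y i‖ + ‖y j‖ = ∑ k ∈ ({i, j} : Finset (Fin n)), ‖y k‖ := by
    rw [Finset.sum_pair hij]
  rw [this]
  exact Finset.sum_le_sum_of_subset_of_nonneg (Finset.subset_univ _)
    (fun k _ _ => norm_nonneg _)


/-- For every `n ≥ 2`, the pair `(ℓ₁ⁿ, 𝕜)` fails property `L_{o,p}`. -/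
theorem l1n_fails_lop (𝕜 : Type*) [RCLike 𝕜] (n : ℕ) (hn : 2 ≤ n) :
    ¬ HasLop 𝕜 (PiLp 1 (fun _ : Fin n => 𝕜)) 𝕜 := by
  intro h
  set i0 : Fin n := ⟨0, by omega⟩ with hi0
  set i1 : Fin n := ⟨1, by omega⟩ with hi1
  have hne : i0 ≠ i1 := by simp [hi0, hi1, Fin.ext_iff]
  -- the point x = (1/2, 1/2, 0, ..., 0)
  set x : PiLp 1 (fun _ : Fin n => 𝕜) :=
    WithLp.toLp 1 (fun i => if i = i0 ∨ i = i1 then (2 : 𝕜)⁻¹ else 0) with hxdef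
  have hxi0 : x i0 = (2 : 𝕜)⁻¹ := by simp [hxdef]
  have hxi1 : x i1 = (2 : 𝕜)⁻¹ := by simp [hxdef]
  have hx : ‖x‖ = 1 := by
    rw [l1n_norm_eq]
    have hcoord : ∀ i : Fin n, ‖x i‖ = if i ∈ ({i0, i1} : Finset (Fin n)) then (2 : ℝ)⁻¹ else 0 := by
      intro i
      by_cases hi : i = i0 ∨ i = i1
      · simp [hxdef, hi, Finset.mem_insert, Finset.mem_singleton]
      · push_neg at hi
        simp [hxdef, hi.1, hi.2, Finset.mem_insert, Finset.mem_singleton]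
    simp_rw [hcoord]
    rw [Finset.sum_ite_mem, Finset.univ_inter, Finset.sum_const, Finset.card_pair hne]
    norm_num
  obtain ⟨η, hη, hT⟩ := h (1/2) (by norm_num) x hx
  set δ : ℝ := min η 1 with hδdef
  have hδpos : 0 < δ := lt_min hη one_pos
  have hδ1 : δ ≤ 1 := min_le_right _ _
  have hδη : δ ≤ η := min_le_left _ _
  set c : 𝕜 := ((1 - δ : ℝ) : 𝕜) with hcdef
  have hcnorm : ‖c‖ = 1 - δ := by
    rw [hcdef, RCLike.norm_ofReal, abs_of_nonneg (by linarith)]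
  -- the linear functional y ↦ y i0 + (1 - δ) y i1
  set L : PiLp 1 (fun _ : Fin n => 𝕜) →ₗ[𝕜] 𝕜 :=
    { toFun := fun y => y i0 + c * y i1
      map_add' := fun y z => by
        simp only [PiLp.add_apply]; ring
      map_smul' := fun a y => by
        simp only [PiLp.smul_apply, smul_eq_mul, RingHom.id_apply]; ring } with hLdef
  have hLapp : ∀ y : PiLp 1 (fun _ : Fin n => 𝕜), L y = y i0 + c * y i1 := fun y => rfl
  have hLbound : ∀ y : PiLp 1 (fun _ : Fin n => 𝕜), ‖L y‖ ≤ 1 * ‖y‖ := by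
    intro y
    rw [hLapp, one_mul]
    have hb1 : ‖c * y i1‖ = (1 - δ) * ‖y i1‖ := by rw [norm_mul, hcnorm]
    have hb2 : (1 - δ) * ‖y i1‖ ≤ ‖y i1‖ := by
      nlinarith [norm_nonneg (y i1)]
    have hb3 : ‖y i0‖ + ‖y i1‖ ≤ ‖y‖ := l1n_two_coords_le y hne
    calc ‖y i0 + c * y i1‖ ≤ ‖y i0‖ + ‖c * y i1‖ := norm_add_le _ _
      _ ≤ ‖y‖ := by rw [hb1]; linarith
  set T : PiLp 1 (fun _ : Fin n => 𝕜) →L[𝕜] 𝕜 := L.mkContinuous 1 hLbound with hTdef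
  have hTapp : ∀ y : PiLp 1 (fun _ : Fin n => 𝕜), T y = y i0 + c * y i1 := fun y => rfl
  -- ‖T‖ = 1
  have hTnorm : ‖T‖ = 1 := by
    apply le_antisymm
    · exact LinearMap.mkContinuous_norm_le L zero_le_one hLbound
    · have he0norm :
          ‖(WithLp.equiv 1 (Fin n → 𝕜)).symm (Pi.single i0 1)‖ = 1 := by
        rw [l1n_norm_eq]
        have hcoord : ∀ i : Fin n,
            ‖(WithLp.equiv 1 (Fin n → 𝕜)).symm (Pi.single i0 1) i‖
              = if i = i0 then (1 : ℝ) else 0 := by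
          intro i
          rw [WithLp.equiv_symm_apply, PiLp.toLp_apply]
          rcases eq_or_ne i i0 with hi | hi
          · subst hi; simp
          · simp [Pi.single_apply, hi]
        simp_rw [hcoord]
        simp
      have hTe0 : T ((WithLp.equiv 1 (Fin n → 𝕜)).symm (Pi.single i0 1)) = 1 := by
        rw [hTapp, WithLp.equiv_symm_apply, PiLp.toLp_apply, PiLp.toLp_apply]
        have h1 : (Pi.single i0 1 : Fin n → 𝕜) i0 = 1 := by simp
        have h2 : (Pi.single i0 1 : Fin n → 𝕜) i1 = 0 := by
          simp [Pi.single_apply, hne.symm]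
        rw [h1, h2, mul_zero, add_zero]
      have hle := T.le_opNorm ((WithLp.equiv 1 (Fin n → 𝕜)).symm (Pi.single i0 1))
      rw [hTe0, he0norm, mul_one, norm_one] at hle
      exact hle
  -- ‖T x‖ = 1 - δ/2 > 1 - η
  have hTx : T x = ((1 - δ / 2 : ℝ) : 𝕜) := by
    rw [hTapp, hxi0, hxi1, hcdef]
    have h2inv : ((2 : 𝕜))⁻¹ = ((2 : ℝ)⁻¹ : 𝕜) := by push_cast; ring
    rw [h2inv]
    push_cast
    ring
  have hTxnorm : ‖T x‖ = 1 - δ / 2 := by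
    rw [hTx, RCLike.norm_ofReal, abs_of_nonneg (by linarith)]
  have hTxgt : 1 - η < ‖T x‖ := by rw [hTxnorm]; linarith
  obtain ⟨x₀, hx₀norm, hTx₀, hclose⟩ := hT T hTnorm hTxgt
  -- deduce x₀ i1 = 0
  have key : x₀ i1 = 0 := by
    have h1 : (1 : ℝ) ≤ ‖x₀ i0‖ + ‖x₀ i1‖ - δ * ‖x₀ i1‖ := by
      calc (1 : ℝ) = ‖T x₀‖ := hTx₀.symm
        _ = ‖x₀ i0 + c * x₀ i1‖ := by rw [hTapp]
        _ ≤ ‖x₀ i0‖ + ‖c * x₀ i1‖ := norm_add_le _ _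
        _ = ‖x₀ i0‖ + (1 - δ) * ‖x₀ i1‖ := by rw [norm_mul, hcnorm]
        _ = ‖x₀ i0‖ + ‖x₀ i1‖ - δ * ‖x₀ i1‖ := by ring
    have h2 : ‖x₀ i0‖ + ‖x₀ i1‖ ≤ 1 := by
      rw [← hx₀norm]; exact l1n_two_coords_le x₀ hne
    have h3 : δ * ‖x₀ i1‖ ≤ 0 := by linarith
    have h4 : ‖x₀ i1‖ ≤ 0 := by
      by_contra hcon
      push_neg at hcon
      exact absurd h3 (not_le.mpr (mul_pos hδpos hcon))
    exact norm_eq_zero.mp (le_antisymm h4 (norm_nonneg _))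
  -- but then ‖x₀ - x‖ ≥ 1/2
  have hfar : (1 / 2 : ℝ) ≤ ‖x₀ - x‖ := by
    have h3 : ‖(x₀ - x) i1‖ ≤ ‖x₀ - x‖ := l1n_coord_le _ i1
    have h4 : (x₀ - x) i1 = x₀ i1 - x i1 := rfl
    rw [h4, key, hxi1, zero_sub, norm_neg, norm_inv, RCLike.norm_two] at h3
    linarith
  linarith
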